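/- In SU_q(2), the matrix M with rows/columns indexed by {0,−,+,3}: M⁰₀ = 1, M⁻₋ = a², M⁻₊ = b², M⁻₃ = q^{1/2}[2]^{1/2}ab, M⁺₋ = c², M⁺₊ = d², M⁺₃ = q^{1/2}[2]^{1/2}cd, M³₋ = q^{1/2}[2]^{1/2}ac, M³₊ = q^{1/2}[2]^{1/2}bd, M³₃ = 1 + [2]bc (all other entries with index 0 being 0) satisfies the comultiplicativity property Δ(M^μ_σ) = Σ_ν M^μ_ν ⊗ M^ν_σ, where Δ is the coproduct of SU_q(2) given by Δ(a) = a⊗a + b⊗c, Δ(b) = a⊗b + b⊗d, Δ(c) = c⊗a + d⊗c, Δ(d) = c⊗b + d⊗d. -/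
import Mathlib


open TensorProduct

/-- In `SU_q(2)`, the 4×4 matrix `M` (rows/columns indexed by
`{0,−,+,3}`, here `0,1,2,3`) with `M⁰₀ = 1`, `M⁻₋ = a²`, `M⁻₊ = b²`,
`M⁻₃ = q^{1/2}[2]^{1/2}ab`, `M⁺₋ = c²`, `M⁺₊ = d²`, `M⁺₃ = q^{1/2}[2]^{1/2}cd`,
`M³₋ = q^{1/2}[2]^{1/2}ac`, `M³₊ = q^{1/2}[2]^{1/2}bd`, `M³₃ = 1 + [2]bc` (all other
entries zero) is comultiplicative:  `Δ(M^μ_σ) = Σ_ν M^μ_ν ⊗ M^ν_σ`, where `Δ` is the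
coproduct of `SU_q(2)` with `Δ(a) = a⊗a + b⊗c`, `Δ(b) = a⊗b + b⊗d`,
`Δ(c) = c⊗a + d⊗c`, `Δ(d) = c⊗b + d⊗d`. -/
theorem statement12 {A : Type*} [Ring A] [Algebra ℝ A] (q : ℝ) (hq : 1 < q)
    (a b c d : A)
    (hba : b * a = q • (a * b)) (hca : c * a = q • (a * c))
    (hdb : d * b = q • (b * d)) (hdc : d * c = q • (c * d))
    (hbc : b * c = c * b)
    (hda : d * a - a * d = (q - q⁻¹) • (b * c))
    (hdet : d * a - q • (b * c) = 1)
    (Δ : A →ₐ[ℝ] A ⊗[ℝ] A)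
    (hΔa : Δ a = a ⊗ₜ a + b ⊗ₜ c) (hΔb : Δ b = a ⊗ₜ b + b ⊗ₜ d)
    (hΔc : Δ c = c ⊗ₜ a + d ⊗ₜ c) (hΔd : Δ d = c ⊗ₜ b + d ⊗ₜ d) :
    (fun (M : Fin 4 → Fin 4 → A) =>
        ∀ μ σ : Fin 4, Δ (M μ σ) = ∑ ν, M μ ν ⊗ₜ[ℝ] M ν σ)
      ![![1, 0, 0, 0],
        ![0, a * a, b * b, Real.sqrt (q * (q + q⁻¹)) • (a * b)],
        ![0, c * c, d * d, Real.sqrt (q * (q + q⁻¹)) • (c * d)],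
        ![0, Real.sqrt (q * (q + q⁻¹)) • (a * c),
            Real.sqrt (q * (q + q⁻¹)) • (b * d),
            1 + (q + q⁻¹) • (b * c)]] := by
  have hq0 : (0:ℝ) < q := lt_trans one_pos hq
  have hqne : q ≠ 0 := ne_of_gt hq0
  have hda2 : d * a = 1 + q • (b * c) := by
    rw [sub_eq_iff_eq_add] at hdet; rw [hdet]
  have had : a * d = 1 + q⁻¹ • (b * c) := by
    have h : a * d = d * a - (q - q⁻¹) • (b * c) := by rw [← hda]; abel
    rw [h, hda2]; module
  intro μ σ
  set s := Real.sqrt (q * (q + q⁻¹)) with hs_def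
  have hsq : q * (q + q⁻¹) = q * q + 1 := by field_simp
  have hs : s * s = q * q + 1 := by
    rw [hs_def, ← hsq]
    exact Real.mul_self_sqrt (by positivity)
  fin_cases μ <;> fin_cases σ <;>
    (try simp only [show ((⟨2, by omega⟩ : Fin 4)) = 2 from rfl,
      show ((⟨3, by omega⟩ : Fin 4)) = 3 from rfl]) <;>
    (try simp [Fin.sum_univ_four, Matrix.vecHead, Matrix.vecTail,
      -TensorProduct.tmul_zero, -TensorProduct.zero_tmul, -map_smul, -map_mul, -map_add]) <;>
    (try simp only [map_one, map_zero, map_add, map_mul, map_smul, hΔa, hΔb, hΔc, hΔd,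
      add_mul, mul_add, smul_mul_assoc, mul_smul_comm,
      Algebra.TensorProduct.tmul_mul_tmul, hba, hca, hdb, hdc, ← hbc, had, hda2,
      TensorProduct.tmul_add, TensorProduct.add_tmul, TensorProduct.tmul_zero,
      TensorProduct.zero_tmul, TensorProduct.tmul_smul, ← TensorProduct.smul_tmul',
      smul_smul, hs, Algebra.TensorProduct.one_def, mul_one, one_mul,
      add_zero, zero_add, smul_add, smul_zero]) <;>
    match_scalars <;> field_simp <;> (first | ring1 | (left; ring1))
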